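/- Let H be a fixed graph with at least one edge. Then n^{-1/m_0(H)} is a threshold for the property of containing a copy of H: if p·n^{1/m_0(H)} → 0 then a.a.s. G(n,p) contains no copy of H, while if p·n^{1/m_0(H)} → ∞ then a.a.s. G(n,p) contains a copy of H. -/

import Mathlib

open MeasureTheory Filter Topology

/-- Bernoulli measure on `Bool` with success probability `p` (clamped to `[0,1]`). -/
noncomputable def bernoulliMeasure (p : ℝ) : Measure Bool :=
  (min (ENNReal.ofReal p) 1) • Measure.dirac true +
    (1 - min (ENNReal.ofReal p) 1) • Measure.dirac false

/-- The distribution of the binomial random graph `G(n,p)`, as a product of independent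
Bernoulli measures, one for each potential edge. -/
noncomputable def gnp (n : ℕ) (p : ℝ) : Measure (Sym2 (Fin n) → Bool) :=
  Measure.pi fun _ => bernoulliMeasure p

/-- The simple graph on `[n]` determined by an outcome of the edge indicators. -/
def graphOf {n : ℕ} (ω : Sym2 (Fin n) → Bool) : SimpleGraph (Fin n) :=
  SimpleGraph.fromRel fun u v => ω s(u, v) = true

/-- `G` contains a (not necessarily induced) copy of `H`. -/
def ContainsCopy {α β : Type*} (H : SimpleGraph α) (G : SimpleGraph β) : Prop :=
  ∃ f : α → β, Function.Injective f ∧ ∀ ⦃u v⦄, H.Adj u v → G.Adj (f u) (f v)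

/-- The maximum degree of a graph on a finite vertex type. -/
noncomputable def maxDeg {V : Type*} [Fintype V] (G : SimpleGraph V) : ℕ :=
  Finset.univ.sup fun v => (G.neighborSet v).ncard

/-- The maximum 0-density `m₀(H)`. -/
noncomputable def m0 {V : Type*} [Fintype V] (H : SimpleGraph V) : ℝ :=
  sSup {x : ℝ | ∃ H' : H.Subgraph, H'.verts.Nonempty ∧
    x = (H'.edgeSet.ncard : ℝ) / (H'.verts.ncard : ℝ)}

/-- The maximum 1-density `m₁(H)`. -/
noncomputable def m1 {V : Type*} [Fintype V] (H : SimpleGraph V) : ℝ :=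
  sSup {x : ℝ | ∃ H' : H.Subgraph, 1 < H'.verts.ncard ∧
    x = (H'.edgeSet.ncard : ℝ) / ((H'.verts.ncard : ℝ) - 1)}

/-- The maximum 2-density `m₂(H)`. -/
noncomputable def m2 {V : Type*} [Fintype V] (H : SimpleGraph V) : ℝ :=
  sSup {x : ℝ | ∃ H' : H.Subgraph, 0 < H'.edgeSet.ncard ∧
    x = if 2 < H'.verts.ncard
      then ((H'.edgeSet.ncard : ℝ) - 1) / ((H'.verts.ncard : ℝ) - 2)
      else 1 / 2}

/-- The maximum Riordan-density `m_R(H)`. -/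
noncomputable def mR {V : Type*} [Fintype V] (H : SimpleGraph V) : ℝ :=
  sSup {x : ℝ | ∃ H' : H.Subgraph, 2 < H'.verts.ncard ∧
    x = (H'.edgeSet.ncard : ℝ) / ((H'.verts.ncard : ℝ) - 2)}

/-- The local 1-density `m₁(x,H)` of `H` at the vertex `x`. -/
noncomputable def m1At {V : Type*} [Fintype V] (H : SimpleGraph V) (x : V) : ℝ :=
  sSup {r : ℝ | ∃ H' : H.Subgraph, x ∈ H'.verts ∧ 1 < H'.verts.ncard ∧
    r = (H'.edgeSet.ncard : ℝ) / ((H'.verts.ncard : ℝ) - 1)}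

/-- `H` is strictly 1-balanced: `H` itself is the unique maximiser of the 1-density. -/
def StrictlyOneBalanced {V : Type*} [Fintype V] (H : SimpleGraph V) : Prop :=
  ∀ H' : H.Subgraph, 1 < H'.verts.ncard → H' ≠ ⊤ →
    (H'.edgeSet.ncard : ℝ) / ((H'.verts.ncard : ℝ) - 1) <
      (H.edgeSet.ncard : ℝ) / ((Fintype.card V : ℝ) - 1)

/-- `H` is vertex-1-balanced: the local 1-density at every vertex equals `m₁(H)`. -/
def VertexOneBalanced {V : Type*} [Fintype V] (H : SimpleGraph V) : Prop :=
  ∀ x : V, m1At H x = m1 H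

/-- `G` (an `n`-vertex graph) contains an `H`-factor: `⌊n / v(H)⌋` pairwise vertex-disjoint
copies of `H`. -/
def HasFactor {V : Type*} [Fintype V] (H : SimpleGraph V) {n : ℕ}
    (G : SimpleGraph (Fin n)) : Prop :=
  ∃ f : Fin (n / Fintype.card V) × V → Fin n, Function.Injective f ∧
    ∀ (i : Fin (n / Fintype.card V)) ⦃u v : V⦄, H.Adj u v → G.Adj (f (i, u)) (f (i, v))


section Aux
open scoped Classical


abbrev Omg (n : ℕ) := Sym2 (Fin n) → Bool
noncomputable def wR (p : ℝ) : Bool → ℝ := fun b => if b then p else 1 - p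
noncomputable def wt {n : ℕ} (p : ℝ) (ω : Omg n) : ℝ := ∏ s, wR p (ω s)
noncomputable def qm {n : ℕ} (p : ℝ) (S : Finset (Omg n)) : ℝ := ∑ ω ∈ S, wt p ω

variable {n : ℕ} {p : ℝ}

section Qm
variable {n : ℕ} {p : ℝ}

lemma wR_nonneg (h0 : 0 ≤ p) (h1 : p ≤ 1) (b : Bool) : 0 ≤ wR p b := by
  cases b <;> simp [wR] <;> linarith

lemma wt_nonneg (h0 : 0 ≤ p) (h1 : p ≤ 1) (ω : Omg n) : 0 ≤ wt p ω :=
  Finset.prod_nonneg fun s _ => wR_nonneg h0 h1 _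

lemma qm_nonneg (h0 : 0 ≤ p) (h1 : p ≤ 1) (S : Finset (Omg n)) : 0 ≤ qm p S :=
  Finset.sum_nonneg fun ω _ => wt_nonneg h0 h1 ω

lemma qm_mono (h0 : 0 ≤ p) (h1 : p ≤ 1) {S T : Finset (Omg n)} (h : S ⊆ T) :
    qm p S ≤ qm p T :=
  Finset.sum_le_sum_of_subset_of_nonneg h fun ω _ _ => wt_nonneg h0 h1 ω

lemma qm_univ (h0 : 0 ≤ p) (h1 : p ≤ 1) : qm p (Finset.univ : Finset (Omg n)) = 1 := by
  have : ∀ s : Sym2 (Fin n), (∑ b ∈ (Finset.univ : Finset Bool), wR p b) = 1 := by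
    intro s; simp [wR]
  calc qm p Finset.univ = ∑ ω ∈ Fintype.piFinset (fun _ : Sym2 (Fin n) => (Finset.univ : Finset Bool)),
        ∏ s, wR p (ω s) := by rw [Fintype.piFinset_univ]; rfl
    _ = ∏ s : Sym2 (Fin n), ∑ b ∈ (Finset.univ : Finset Bool), wR p b := (Finset.prod_univ_sum _ _).symm
    _ = 1 := by simp [wR]

/-- cylinder probability -/
lemma qm_cyl (h0 : 0 ≤ p) (h1 : p ≤ 1) (T : Finset (Sym2 (Fin n))) :
    qm p (Finset.univ.filter (fun ω : Omg n => ∀ s ∈ T, ω s = true)) = p ^ T.card := by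
  have key : qm p (Finset.univ.filter (fun ω : Omg n => ∀ s ∈ T, ω s = true))
      = ∑ ω : Omg n, ∏ s, (if s ∈ T then (if ω s then p else 0) else wR p (ω s)) := by
    rw [qm, ← Finset.sum_filter_add_sum_filter_not Finset.univ (fun ω : Omg n => ∀ s ∈ T, ω s = true)
      (fun ω => ∏ s, (if s ∈ T then (if ω s then p else 0) else wR p (ω s)))]
    have h2 : ∀ ω ∈ Finset.univ.filter (fun ω : Omg n => ∀ s ∈ T, ω s = true),
        wt p ω = ∏ s, (if s ∈ T then (if ω s then p else 0) else wR p (ω s)) := by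
      intro ω hω
      simp only [Finset.mem_filter] at hω
      refine Finset.prod_congr rfl fun s _ => ?_
      by_cases hs : s ∈ T
      · simp [hs, hω.2 s hs, wR]
      · simp [hs]
    have h3 : ∀ ω ∈ Finset.univ.filter (fun ω : Omg n => ¬ ∀ s ∈ T, ω s = true),
        (∏ s, (if s ∈ T then (if ω s then p else 0) else wR p (ω s))) = 0 := by
      intro ω hω
      simp only [Finset.mem_filter] at hω
      push_neg at hω
      obtain ⟨s, hs, hval⟩ := hω.2
      refine Finset.prod_eq_zero (Finset.mem_univ s) ?_
      simp [hs, hval]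
    rw [Finset.sum_congr rfl h2, Finset.sum_congr rfl h3]
    simp
  rw [key]
  have := (Finset.prod_univ_sum (fun _ : Sym2 (Fin n) => (Finset.univ : Finset Bool))
    (fun s b => if s ∈ T then (if b then p else 0) else wR p b)).symm
  rw [Fintype.piFinset_univ] at this
  rw [this]
  have h4 : ∀ s : Sym2 (Fin n), (∑ b ∈ (Finset.univ : Finset Bool),
      (if s ∈ T then (if b then p else 0) else wR p b)) = if s ∈ T then p else 1 := by
    intro s; by_cases hs : s ∈ T <;> simp [hs, wR]
  rw [Finset.prod_congr rfl (fun s _ => h4 s), Finset.prod_ite_mem, Finset.univ_inter,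
    Finset.prod_const]

end Qm

lemma meas_all (S : Set (Omg n)) : MeasurableSet S := by
  have hsing : ∀ ω : Omg n, MeasurableSet ({ω} : Set (Omg n)) := by
    intro ω
    have : ({ω} : Set (Omg n)) = ⋂ s, (fun f : Omg n => f s) ⁻¹' {ω s} := by
      ext f; simp [funext_iff, Set.mem_iInter]
    rw [this]
    exact MeasurableSet.iInter fun s => (measurable_pi_apply s) (MeasurableSet.singleton _)
  have : S = ⋃ ω ∈ S, {ω} := by simp
  rw [this]
  exact MeasurableSet.biUnion (Set.to_countable S) fun ω _ => hsing ω

lemma bern_true (h0 : 0 ≤ p) (h1 : p ≤ 1) : bernoulliMeasure p {true} = ENNReal.ofReal p := by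
  have hmin : min (ENNReal.ofReal p) 1 = ENNReal.ofReal p := by
    rw [min_eq_left]
    exact ENNReal.ofReal_le_one.mpr h1
  simp [bernoulliMeasure, hmin, Measure.dirac_apply', MeasurableSet.singleton]

lemma bern_false (h0 : 0 ≤ p) (h1 : p ≤ 1) : bernoulliMeasure p {false} = ENNReal.ofReal (1 - p) := by
  have hmin : min (ENNReal.ofReal p) 1 = ENNReal.ofReal p := by
    rw [min_eq_left]; exact ENNReal.ofReal_le_one.mpr h1
  simp only [bernoulliMeasure, Measure.add_apply, Measure.smul_apply, smul_eq_mul, hmin]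
  rw [Measure.dirac_apply' _ (MeasurableSet.singleton _),
    Measure.dirac_apply' _ (MeasurableSet.singleton _)]
  have : (ENNReal.ofReal (1 - p)) = 1 - ENNReal.ofReal p := by
    rw [ENNReal.ofReal_sub _ h0, ENNReal.ofReal_one]
  simp [this]

instance bern_prob (p : ℝ) : IsProbabilityMeasure (bernoulliMeasure p) := by
  constructor
  simp only [bernoulliMeasure, Measure.add_apply, Measure.smul_apply, smul_eq_mul,
    measure_univ, mul_one]
  exact add_tsub_cancel_of_le (min_le_right _ _)

lemma bern_b (h0 : 0 ≤ p) (h1 : p ≤ 1) (b : Bool) :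
    bernoulliMeasure p {b} = ENNReal.ofReal (wR p b) := by
  cases b
  · rw [bern_false h0 h1]; rfl
  · rw [bern_true h0 h1]; rfl

lemma gnp_singleton (h0 : 0 ≤ p) (h1 : p ≤ 1) (ω : Omg n) :
    gnp n p {ω} = ENNReal.ofReal (wt p ω) := by
  rw [← Set.univ_pi_singleton ω, gnp, Measure.pi_pi]
  rw [Finset.prod_congr rfl (fun s _ => bern_b h0 h1 (ω s))]
  rw [← ENNReal.ofReal_prod_of_nonneg]
  · rfl
  · intro s _
    cases ω s <;> simp [wR] <;> linarith

lemma gnp_eq_qm (h0 : 0 ≤ p) (h1 : p ≤ 1) (S : Finset (Omg n)) :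
    gnp n p (↑S : Set (Omg n)) = ENNReal.ofReal (qm p S) := by
  have : (↑S : Set (Omg n)) = ⋃ ω ∈ S, {ω} := by ext ω; simp
  rw [this, measure_biUnion_finset]
  · rw [Finset.sum_congr rfl (fun ω _ => gnp_singleton h0 h1 ω)]
    rw [← ENNReal.ofReal_sum_of_nonneg]
    · rfl
    · intro ω _
      exact Finset.prod_nonneg fun s _ => by cases ω s <;> simp [wR] <;> linarith
  · intro a ha b hb hab
    simp [Function.onFun, Set.disjoint_singleton, hab]
  · intro ω _
    exact meas_all _

section M0facts
variable {V : Type} [Fintype V] (H : SimpleGraph V)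


def S0 (H : SimpleGraph V) : Set ℝ := {x : ℝ | ∃ H' : H.Subgraph, H'.verts.Nonempty ∧
    x = (H'.edgeSet.ncard : ℝ) / (H'.verts.ncard : ℝ)}

lemma m0_eq : m0 H = sSup (S0 H) := rfl

lemma edge_ncard_le (H' : H.Subgraph) : H'.edgeSet.ncard ≤ Fintype.card (Sym2 V) := by
  simpa [Set.ncard_univ] using
    Set.ncard_le_ncard (Set.subset_univ H'.edgeSet) Set.finite_univ

lemma verts_ncard_le (H' : H.Subgraph) : H'.verts.ncard ≤ Fintype.card V := by
  simpa [Set.ncard_univ] using Set.ncard_le_ncard (Set.subset_univ H'.verts) Set.finite_univ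

lemma S0_finite : (S0 H).Finite := by
  apply Set.Finite.subset (Set.Finite.image (f := fun q : ℕ × ℕ => (q.1 : ℝ) / (q.2 : ℝ))
    (Set.finite_Icc (0, 0) (Fintype.card (Sym2 V), Fintype.card V)))
  rintro x ⟨H', hne, rfl⟩
  exact ⟨(H'.edgeSet.ncard, H'.verts.ncard),
    by simp [Prod.le_def, edge_ncard_le, verts_ncard_le], rfl⟩

lemma S0_bddAbove : BddAbove (S0 H) := (S0_finite H).bddAbove

lemma S0_nonempty (hH : H.edgeSet.Nonempty) : (S0 H).Nonempty := by
  obtain ⟨e, he⟩ := hH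
  refine ⟨_, ⊤, ?_, rfl⟩
  rw [SimpleGraph.Subgraph.verts_top]
  induction e with
  | _ u v => exact ⟨u, trivial⟩

lemma m0_mem (hH : H.edgeSet.Nonempty) : m0 H ∈ S0 H :=
  (S0_nonempty H hH).csSup_mem (S0_finite H)

lemma le_m0 {x : ℝ} (hx : x ∈ S0 H) : x ≤ m0 H := le_csSup (S0_bddAbove H) hx

lemma m0_pos (hH : H.edgeSet.Nonempty) : 0 < m0 H := by
  have hmem : ((H.edgeSet.ncard : ℝ) / ((⊤ : H.Subgraph).verts.ncard : ℝ)) ∈ S0 H := by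
    refine ⟨⊤, ?_, by rw [SimpleGraph.Subgraph.edgeSet_top]⟩
    obtain ⟨e, he⟩ := hH
    rw [SimpleGraph.Subgraph.verts_top]
    induction e with
    | _ u v => exact ⟨u, trivial⟩
  refine lt_of_lt_of_le ?_ (le_m0 H hmem)
  apply div_pos
  · have : 0 < H.edgeSet.ncard := by
      rw [Set.ncard_pos (Set.toFinite _)]; exact hH
    exact_mod_cast this
  · have : 0 < (⊤ : H.Subgraph).verts.ncard := by
      rw [Set.ncard_pos (Set.toFinite _)]
      rw [SimpleGraph.Subgraph.verts_top]
      obtain ⟨e, he⟩ := hH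
      induction e with
      | _ u v => exact ⟨u, trivial⟩
    exact_mod_cast this

lemma density_le_m0 (H' : H.Subgraph) (hne : H'.verts.Nonempty) :
    (H'.edgeSet.ncard : ℝ) ≤ m0 H * (H'.verts.ncard : ℝ) := by
  have h1 : (H'.edgeSet.ncard : ℝ) / (H'.verts.ncard : ℝ) ≤ m0 H :=
    le_m0 H ⟨H', hne, rfl⟩
  have hv : (0:ℝ) < (H'.verts.ncard : ℝ) := by
    have : 0 < H'.verts.ncard := by rw [Set.ncard_pos (Set.toFinite _)]; exact hne
    exact_mod_cast this
  calc (H'.edgeSet.ncard : ℝ) = (H'.edgeSet.ncard : ℝ) / (H'.verts.ncard : ℝ) * H'.verts.ncard := by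
        field_simp
    _ ≤ m0 H * H'.verts.ncard := by
        apply mul_le_mul_of_nonneg_right h1 (le_of_lt hv)

/-- the induced subgraph on a vertex finset -/
def indSub (A : Finset V) : H.Subgraph where
  verts := ↑A
  Adj u v := H.Adj u v ∧ u ∈ A ∧ v ∈ A
  adj_sub h := h.1
  edge_vert h := h.2.1
  symm := ⟨fun u v h => ⟨h.1.symm, h.2.2, h.2.1⟩⟩

lemma edges_in_le_m0 (A : Finset V) (hA : A.Nonempty) :
    (((H.edgeSet.toFinite.toFinset.filter (fun e => ∀ x ∈ e, x ∈ A)).card : ℝ)) ≤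
      m0 H * A.card := by
  have hsub : (↑(H.edgeSet.toFinite.toFinset.filter (fun e => ∀ x ∈ e, x ∈ A)) : Set (Sym2 V))
      ⊆ (indSub H A).edgeSet := by
    intro e he
    simp only [Finset.coe_filter, Set.mem_setOf_eq, Set.Finite.mem_toFinset] at he
    obtain ⟨he1, he2⟩ := he
    induction e with
    | _ u v =>
      rw [SimpleGraph.Subgraph.mem_edgeSet]
      exact ⟨he1, he2 u (Sym2.mem_mk_left u v), he2 v (Sym2.mem_mk_right u v)⟩
  have hcard : (H.edgeSet.toFinite.toFinset.filter (fun e => ∀ x ∈ e, x ∈ A)).card ≤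
      (indSub H A).edgeSet.ncard := by
    have := Set.ncard_le_ncard hsub (Set.toFinite _)
    rwa [Set.ncard_coe_finset] at this
  have hv : ((indSub H A).verts.ncard : ℝ) = A.card := by
    simp [indSub, Set.ncard_coe_finset]
  have := density_le_m0 H (indSub H A) (by simpa [indSub] using hA)
  rw [hv] at this
  exact le_trans (by exact_mod_cast hcard) this

end M0facts

section CopyIff
variable {V : Type} [Fintype V] (H : SimpleGraph V) {n : ℕ}

noncomputable def Et (H : SimpleGraph V) : Finset (Sym2 V) := H.edgeSet.toFinite.toFinset

lemma copy_iff (ω : Omg n) : ContainsCopy H (graphOf ω) ↔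
    ∃ f : V → Fin n, Function.Injective f ∧ ∀ s ∈ Et H, ω (Sym2.map f s) = true := by
  constructor
  · rintro ⟨f, hfi, hfa⟩
    refine ⟨f, hfi, fun s hs => ?_⟩
    rw [Et, Set.Finite.mem_toFinset] at hs
    induction s with
    | _ u v =>
      rw [SimpleGraph.mem_edgeSet] at hs
      have := hfa hs
      rw [graphOf, SimpleGraph.fromRel_adj] at this
      rw [Sym2.map_pair_eq]
      rcases this.2 with h | h
      · exact h
      · rw [Sym2.eq_swap] at h; exact h
  · rintro ⟨f, hfi, hfa⟩
    refine ⟨f, hfi, fun u v huv => ?_⟩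
    rw [graphOf, SimpleGraph.fromRel_adj]
    refine ⟨fun hc => huv.ne (hfi hc), Or.inl ?_⟩
    have : s(u, v) ∈ Et H := by
      rw [Et, Set.Finite.mem_toFinset, SimpleGraph.mem_edgeSet]; exact huv
    have := hfa _ this
    rwa [Sym2.map_pair_eq] at this
end CopyIff

section Moments
variable {V : Type} [Fintype V] (H : SimpleGraph V) (n : ℕ) (p : ℝ)

noncomputable def Inj (V : Type) [Fintype V] (n : ℕ) : Finset (V → Fin n) :=
  Finset.univ.filter (fun f => Function.Injective f)

noncomputable def Tf (H : SimpleGraph V) {n : ℕ} (f : V → Fin n) : Finset (Sym2 (Fin n)) :=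
  (Et H).image (Sym2.map f)

noncomputable def cyl {n : ℕ} (T : Finset (Sym2 (Fin n))) : Finset (Omg n) :=
  Finset.univ.filter (fun ω => ∀ s ∈ T, ω s = true)

noncomputable def Xcnt (H : SimpleGraph V) (n : ℕ) (ω : Omg n) : ℝ :=
  ∑ f ∈ Inj V n, (if ∀ s ∈ Tf H f, ω s = true then (1:ℝ) else 0)

lemma Tf_card {f : V → Fin n} (hf : Function.Injective f) : (Tf H f).card = (Et H).card :=
  Finset.card_image_of_injective _ (Sym2.map.injective hf)

lemma first_moment :
    ∑ ω : Omg n, wt p ω * Xcnt H n ω = ∑ f ∈ Inj V n, ∑ ω ∈ cyl (Tf H f), wt p ω := by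
  have : ∀ ω : Omg n, wt p ω * Xcnt H n ω
      = ∑ f ∈ Inj V n, (if ∀ s ∈ Tf H f, ω s = true then wt p ω else 0) := by
    intro ω
    rw [Xcnt, Finset.mul_sum]
    exact Finset.sum_congr rfl fun f _ => by by_cases h : ∀ s ∈ Tf H f, ω s = true <;> simp [h]
  rw [Finset.sum_congr rfl fun ω _ => this ω, Finset.sum_comm]
  exact Finset.sum_congr rfl fun f _ => by rw [cyl, Finset.sum_filter]

lemma second_moment_id :
    ∑ ω : Omg n, wt p ω * (Xcnt H n ω)^2
      = ∑ f ∈ Inj V n, ∑ g ∈ Inj V n, ∑ ω ∈ cyl (Tf H f ∪ Tf H g), wt p ω := by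
  have : ∀ ω : Omg n, wt p ω * (Xcnt H n ω)^2
      = ∑ f ∈ Inj V n, ∑ g ∈ Inj V n,
          (if ∀ s ∈ Tf H f ∪ Tf H g, ω s = true then wt p ω else 0) := by
    intro ω
    rw [Xcnt, sq, Finset.sum_mul_sum, Finset.mul_sum]
    refine Finset.sum_congr rfl fun f _ => ?_
    rw [Finset.mul_sum]
    refine Finset.sum_congr rfl fun g _ => ?_
    have hiff : (∀ s ∈ Tf H f ∪ Tf H g, ω s = true) ↔
        ((∀ s ∈ Tf H f, ω s = true) ∧ (∀ s ∈ Tf H g, ω s = true)) := by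
      constructor
      · intro h
        exact ⟨fun s hs => h s (Finset.mem_union_left _ hs),
          fun s hs => h s (Finset.mem_union_right _ hs)⟩
      · rintro ⟨h1, h2⟩ s hs
        rcases Finset.mem_union.mp hs with h | h
        exacts [h1 s h, h2 s h]
    simp only [hiff]
    by_cases hf : ∀ s ∈ Tf H f, ω s = true <;>
      by_cases hg : ∀ s ∈ Tf H g, ω s = true
    · rw [if_pos hf, if_pos hg, if_pos ⟨hf, hg⟩]; ring
    · rw [if_pos hf, if_neg hg, if_neg (fun h : (_ ∧ _) => hg h.2)]; ring
    · rw [if_neg hf, if_pos hg, if_neg (fun h : (_ ∧ _) => hf h.1)]; ring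
    · rw [if_neg hf, if_neg hg, if_neg (fun h : (_ ∧ _) => hf h.1)]; ring
  rw [Finset.sum_congr rfl fun ω _ => this ω, Finset.sum_comm]
  refine Finset.sum_congr rfl fun f _ => ?_
  rw [Finset.sum_comm]
  exact Finset.sum_congr rfl fun g _ => by rw [cyl, Finset.sum_filter]

/-- abstract Chebyshev-type bound -/
lemma chebyshev_zero {Ω' : Type*} [Fintype Ω'] (w X : Ω' → ℝ) (hw : ∀ ω, 0 ≤ w ω)
    (hw1 : ∑ ω, w ω = 1) :
    (∑ ω ∈ Finset.univ.filter (fun ω => X ω = 0), w ω) * (∑ ω, w ω * X ω)^2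
      ≤ (∑ ω, w ω * (X ω)^2) - (∑ ω, w ω * X ω)^2 := by
  set μ := ∑ ω, w ω * X ω with hμ
  have hvar : (∑ ω, w ω * (X ω)^2) - μ^2 = ∑ ω, w ω * (X ω - μ)^2 := by
    have : ∀ ω, w ω * (X ω - μ)^2 = w ω * (X ω)^2 - 2 * μ * (w ω * X ω) + μ^2 * w ω := by
      intro ω; ring
    rw [Finset.sum_congr rfl fun ω _ => this ω, Finset.sum_add_distrib,
      Finset.sum_sub_distrib, ← Finset.mul_sum, ← Finset.mul_sum, hw1]
    ring
  rw [hvar]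
  calc (∑ ω ∈ Finset.univ.filter (fun ω => X ω = 0), w ω) * μ^2
      = ∑ ω ∈ Finset.univ.filter (fun ω => X ω = 0), w ω * (X ω - μ)^2 := by
        rw [Finset.sum_mul]
        refine Finset.sum_congr rfl fun ω hω => ?_
        rw [Finset.mem_filter] at hω
        rw [hω.2]; ring
    _ ≤ ∑ ω, w ω * (X ω - μ)^2 :=
        Finset.sum_le_sum_of_subset_of_nonneg (Finset.filter_subset _ _)
          (fun ω _ _ => mul_nonneg (hw ω) (sq_nonneg _))

end Moments

section Counting
variable {V : Type} [Fintype V] {n : ℕ}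

lemma Inj_card : (Inj V n).card = n.descFactorial (Fintype.card V) := by
  rw [Inj, ← Fintype.card_subtype, Fintype.card_congr
    (Equiv.subtypeInjectiveEquivEmbedding V (Fin n)), Fintype.card_embedding_eq,
    Fintype.card_fin]

lemma descFactorial_ge (n k : ℕ) : (n - k)^k ≤ n.descFactorial k := by
  induction k with
  | zero => simp
  | succ k ih =>
    rw [Nat.descFactorial_succ, pow_succ]
    calc (n - (k+1))^k * (n - (k+1)) ≤ n.descFactorial k * (n - k) := by
          apply Nat.mul_le_mul
          · exact le_trans (Nat.pow_le_pow_left (Nat.sub_le_sub_left (Nat.le_succ k) n) k) ih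
          · exact Nat.sub_le_sub_left (Nat.le_succ k) n
      _ = (n - k) * n.descFactorial k := Nat.mul_comm _ _

variable (H : SimpleGraph V)

lemma X_eq_zero {ω : Omg n} (h : ¬ ContainsCopy H (graphOf ω)) : Xcnt H n ω = 0 := by
  rw [Xcnt]
  apply Finset.sum_eq_zero
  intro f hf
  rw [if_neg]
  intro hall
  apply h
  rw [copy_iff]
  refine ⟨f, (Finset.mem_filter.mp hf).2, fun s hs => ?_⟩
  exact hall _ (Finset.mem_image_of_mem _ hs)

noncomputable def Aset (f g : V → Fin n) : Finset V :=
  Finset.univ.filter (fun x => ∃ y, g y = f x)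

lemma inter_empty {f g : V → Fin n} (h : Aset f g = ∅) : Tf H f ∩ Tf H g = ∅ := by
  rw [Finset.eq_empty_iff_forall_notMem]
  intro s hs
  rw [Finset.mem_inter] at hs
  obtain ⟨e, he, rfl⟩ := Finset.mem_image.mp hs.1
  have hx : (Quot.out e).1 ∈ e := Sym2.out_fst_mem e
  have hfx : f (Quot.out e).1 ∈ Sym2.map f e := Sym2.mem_map.mpr ⟨_, hx, rfl⟩
  obtain ⟨e', he', heq⟩ := Finset.mem_image.mp hs.2
  rw [← heq] at hfx
  obtain ⟨y, hy, hyx⟩ := Sym2.mem_map.mp hfx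
  have : (Quot.out e).1 ∈ Aset f g :=
    Finset.mem_filter.mpr ⟨Finset.mem_univ _, ⟨y, hyx⟩⟩
  rw [h] at this
  exact Finset.notMem_empty _ this

lemma inter_card_le {f g : V → Fin n} (hf : Function.Injective f) :
    (Tf H f ∩ Tf H g).card ≤ ((Et H).filter (fun e => ∀ x ∈ e, x ∈ Aset f g)).card := by
  have hsub : Tf H f ∩ Tf H g ⊆
      ((Et H).filter (fun e => ∀ x ∈ e, x ∈ Aset f g)).image (Sym2.map f) := by
    intro s hs
    rw [Finset.mem_inter] at hs
    obtain ⟨e, he, rfl⟩ := Finset.mem_image.mp hs.1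
    refine Finset.mem_image_of_mem _ (Finset.mem_filter.mpr ⟨he, fun x hx => ?_⟩)
    have hfx : f x ∈ Sym2.map f e := Sym2.mem_map.mpr ⟨x, hx, rfl⟩
    obtain ⟨e', he', heq⟩ := Finset.mem_image.mp hs.2
    rw [← heq] at hfx
    obtain ⟨y, hy, hyx⟩ := Sym2.mem_map.mp hfx
    exact Finset.mem_filter.mpr ⟨Finset.mem_univ x, ⟨y, hyx⟩⟩
  calc (Tf H f ∩ Tf H g).card ≤ _ := Finset.card_le_card hsub
    _ ≤ _ := Finset.card_image_le

lemma fiber_card [Nonempty V] (B : Finset V) :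
    (((Inj V n) ×ˢ (Inj V n)).filter (fun q => Aset q.1 q.2 = B)).card ≤
      (Inj V n).card * (Fintype.card V)^B.card * n^(Fintype.card V - B.card) := by
  have := Finset.card_le_card_of_injOn
    (f := fun q : (V → Fin n) × (V → Fin n) =>
      (q.2, fun x : ↥B => Function.invFun q.2 (q.1 x), fun x : ↥(Bᶜ : Finset V) => q.1 x))
    (s := ((Inj V n) ×ˢ (Inj V n)).filter (fun q => Aset q.1 q.2 = B))
    (t := (Inj V n) ×ˢ ((Finset.univ : Finset (↥B → V)) ×ˢ
      (Finset.univ : Finset (↥(Bᶜ : Finset V) → Fin n))))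
    (by
      intro q hq
      rw [Finset.mem_coe, Finset.mem_filter, Finset.mem_product] at hq
      exact Finset.mem_product.mpr ⟨hq.1.2, Finset.mem_product.mpr ⟨Finset.mem_univ _, Finset.mem_univ _⟩⟩)
    (by
      rintro ⟨f1, g1⟩ h1 ⟨f2, g2⟩ h2 heq
      simp only [Finset.coe_filter, Set.mem_setOf_eq] at h1 h2
      obtain ⟨hq1, hA1⟩ := h1
      obtain ⟨hq2, hA2⟩ := h2
      simp only [Prod.mk.injEq] at heq
      obtain ⟨hg, hmid, hout⟩ := heq
      subst hg
      refine Prod.ext ?_ rfl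
      funext x
      by_cases hx : x ∈ B
      · have h1x : ∃ y, g1 y = f1 x := by
          have : x ∈ Aset f1 g1 := hA1 ▸ hx
          exact (Finset.mem_filter.mp this).2
        have h2x : ∃ y, g1 y = f2 x := by
          have : x ∈ Aset f2 g1 := hA2 ▸ hx
          exact (Finset.mem_filter.mp this).2
        have e1 : g1 (Function.invFun g1 (f1 x)) = f1 x := Function.invFun_eq h1x
        have e2 : g1 (Function.invFun g1 (f2 x)) = f2 x := Function.invFun_eq h2x
        have := congrFun hmid ⟨x, hx⟩
        simp only at this
        show f1 x = f2 x
        rw [← e1, ← e2, this]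
      · have hxc : x ∈ (Bᶜ : Finset V) := Finset.mem_compl.mpr hx
        exact congrFun hout ⟨x, hxc⟩)
  calc _ ≤ _ := this
    _ = (Inj V n).card * ((Fintype.card V)^B.card * n^(Fintype.card V - B.card)) := by
        rw [Finset.card_product, Finset.card_product, Finset.card_univ, Finset.card_univ,
          Fintype.card_fun, Fintype.card_fun, Fintype.card_coe, Fintype.card_coe,
          Fintype.card_fin, Finset.card_compl]
    _ = _ := by ring

end Counting

section Main
variable {V : Type} [Fintype V] (H : SimpleGraph V)

lemma mu_identity {n : ℕ} {p : ℝ} (hp0 : 0 ≤ p) (hp1 : p ≤ 1) :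
    ∑ ω : Omg n, wt p ω * Xcnt H n ω = ((Inj V n).card : ℝ) * p ^ (Et H).card := by
  rw [first_moment]
  have : ∀ f ∈ Inj V n, (∑ ω ∈ cyl (Tf H f), wt p ω) = p ^ (Et H).card := by
    intro f hf
    have h1 : (∑ ω ∈ cyl (Tf H f), wt p ω) = qm p (cyl (Tf H f)) := rfl
    rw [h1, cyl, qm_cyl hp0 hp1, Tf_card H n (Finset.mem_filter.mp hf).2]
  rw [Finset.sum_congr rfl this, Finset.sum_const, nsmul_eq_mul]

lemma E2_identity {n : ℕ} {p : ℝ} (hp0 : 0 ≤ p) (hp1 : p ≤ 1) :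
    ∑ ω : Omg n, wt p ω * (Xcnt H n ω)^2
      = ∑ q ∈ (Inj V n) ×ˢ (Inj V n), p ^ (Tf H q.1 ∪ Tf H q.2).card := by
  rw [second_moment_id, ← Finset.sum_product']
  refine Finset.sum_congr rfl fun q _ => ?_
  have h1 : (∑ ω ∈ cyl (Tf H q.1 ∪ Tf H q.2), wt p ω) = qm p (cyl (Tf H q.1 ∪ Tf H q.2)) := rfl
  rw [h1, cyl, qm_cyl hp0 hp1]

lemma nocopy_bound {n : ℕ} {p : ℝ} (hp0 : 0 ≤ p) (hp1 : p ≤ 1)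
    (hH : H.edgeSet.Nonempty) (hn2v : 2 * Fintype.card V ≤ n)
    (hnp : 1 ≤ (n : ℝ) * p ^ (m0 H)) :
    qm p (Finset.univ.filter (fun ω : Omg n => ¬ ContainsCopy H (graphOf ω))) ≤
      ((2:ℝ) ^ Fintype.card V * 2 ^ Fintype.card V *
        (Fintype.card V : ℝ) ^ Fintype.card V) / ((n : ℝ) * p ^ (m0 H)) := by
  obtain ⟨e₁, he₁⟩ := hH
  have hVne : Nonempty V := by
    induction e₁ with
    | _ u v => exact ⟨u⟩
  set v := Fintype.card V with hvdef
  set e := (Et H).card with hedef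
  set m := m0 H with hmdef
  have hm_pos : 0 < m := m0_pos H ⟨e₁, he₁⟩
  have hv1 : 1 ≤ v := Fintype.card_pos
  have hvn : v ≤ n := le_trans (by omega) hn2v
  -- p > 0
  have hppos : 0 < p := by
    rcases lt_or_eq_of_le hp0 with h | h
    · exact h
    · exfalso
      rw [← h] at hnp
      rw [Real.zero_rpow (ne_of_gt hm_pos)] at hnp
      simp at hnp
      linarith
  have hpm_pos : 0 < p ^ m := Real.rpow_pos_of_pos hppos _
  have hpm_le1 : p ^ m ≤ 1 := Real.rpow_le_one hp0 hp1 (le_of_lt hm_pos)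
  have hnpm_pos : 0 < (n : ℝ) * p ^ m := lt_of_lt_of_le one_pos hnp
  have hnpos : (0:ℝ) < n := by
    by_contra h
    push_neg at h
    have : (n:ℝ) * p ^ m ≤ 0 := mul_nonpos_of_nonpos_of_nonneg h (le_of_lt hpm_pos)
    linarith
  set I := ((Inj V n).card : ℝ) with hIdef
  have hI_low : ((n:ℝ)/2)^v ≤ I := by
    have h1 : (n - v)^v ≤ (Inj V n).card := by
      rw [Inj_card]; exact descFactorial_ge n v
    have h2 : (((n - v : ℕ)):ℝ)^v ≤ I := by rw [hIdef]; exact_mod_cast h1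
    refine le_trans ?_ h2
    apply pow_le_pow_left₀ (by positivity)
    rw [Nat.cast_sub hvn]
    have : (2*v : ℝ) ≤ n := by exact_mod_cast hn2v
    linarith
  have hIpos : 0 < I := lt_of_lt_of_le (by positivity) hI_low
  set μ := I * p ^ e with hμdef
  have hμpos : 0 < μ := mul_pos hIpos (pow_pos hppos e)
  -- Chebyshev
  have hcheb := chebyshev_zero (wt p) (Xcnt H n) (wt_nonneg hp0 hp1) (qm_univ hp0 hp1)
  rw [mu_identity H hp0 hp1] at hcheb
  have hsub : qm p (Finset.univ.filter (fun ω : Omg n => ¬ ContainsCopy H (graphOf ω)))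
      ≤ qm p (Finset.univ.filter (fun ω : Omg n => Xcnt H n ω = 0)) := by
    apply qm_mono hp0 hp1
    intro ω hω
    rw [Finset.mem_filter] at *
    exact ⟨hω.1, X_eq_zero H hω.2⟩
  -- bound on E2 - μ²
  set bnd : (V → Fin n) × (V → Fin n) → ℝ := fun q =>
    if (Aset q.1 q.2).Nonempty then (p^e * p^e) / ((p ^ m) ^ ((Aset q.1 q.2).card)) else 0
    with hbnddef
  have hdiff : (∑ ω : Omg n, wt p ω * (Xcnt H n ω)^2) - μ^2 ≤ ∑ q ∈ (Inj V n) ×ˢ (Inj V n), bnd q := by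
    rw [E2_identity H hp0 hp1]
    have hμsq : μ^2 = ∑ q ∈ (Inj V n) ×ˢ (Inj V n), p^e * p^e := by
      rw [Finset.sum_const, Finset.card_product, nsmul_eq_mul]
      push_cast
      rw [hμdef]
      ring
    rw [hμsq, ← Finset.sum_sub_distrib]
    apply Finset.sum_le_sum
    rintro ⟨f, g⟩ hq
    rw [Finset.mem_product, Inj, Finset.mem_filter, Finset.mem_filter] at hq
    have hfinj : Function.Injective f := hq.1.2
    have hginj : Function.Injective g := hq.2.2
    have hcu : (Tf H f ∪ Tf H g).card + (Tf H f ∩ Tf H g).card = e + e := by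
      rw [Finset.card_union_add_card_inter, Tf_card H n hfinj, Tf_card H n hginj]
    by_cases hA : (Aset f g).Nonempty
    · have hsh : ((Tf H f ∩ Tf H g).card : ℝ) ≤ m * (Aset f g).card := by
        refine le_trans ?_ (edges_in_le_m0 H (Aset f g) hA)
        exact_mod_cast inter_card_le H hfinj
      have hpsh : (p ^ m) ^ ((Aset f g).card) ≤ p ^ ((Tf H f ∩ Tf H g).card) := by
        have h1 : (p ^ m) ^ ((Aset f g).card) = p ^ (m * (Aset f g).card) := by
          rw [Real.rpow_mul (le_of_lt hppos), Real.rpow_natCast]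
        have h2 : (p:ℝ) ^ (((Tf H f ∩ Tf H g).card : ℕ) : ℝ)
            = p ^ ((Tf H f ∩ Tf H g).card : ℕ) := Real.rpow_natCast p _
        rw [h1, ← h2]
        exact Real.rpow_le_rpow_of_exponent_ge hppos hp1 hsh
      have hpos2 : 0 < (p ^ m) ^ ((Aset f g).card) := pow_pos hpm_pos _
      have hkey : p ^ (Tf H f ∪ Tf H g).card ≤ (p^e * p^e) / ((p ^ m) ^ ((Aset f g).card)) := by
        have hprod : p ^ (Tf H f ∪ Tf H g).card * p ^ (Tf H f ∩ Tf H g).card = p^e * p^e := by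
          rw [← pow_add, hcu, pow_add]
        have heq : p ^ (Tf H f ∪ Tf H g).card = (p^e * p^e) / p ^ (Tf H f ∩ Tf H g).card :=
          eq_div_of_mul_eq (ne_of_gt (pow_pos hppos _)) hprod
        rw [heq]
        exact div_le_div_of_nonneg_left (by positivity) hpos2 hpsh
      rw [hbnddef]
      simp only [hA, if_pos]
      have h0 : 0 ≤ p^e * p^e := by positivity
      linarith [hkey]
    · rw [hbnddef]
      simp only [hA, if_neg, not_false_iff]
      have hAe : Aset f g = ∅ := Finset.not_nonempty_iff_eq_empty.mp hA
      have : (Tf H f ∩ Tf H g).card = 0 := by rw [inter_empty H hAe]; simp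
      have hcu2 : (Tf H f ∪ Tf H g).card = e + e := by omega
      rw [hcu2, pow_add]
      simp
  -- fiberwise bound
  set val : Finset V → ℝ := fun B =>
    if B.Nonempty then (p^e * p^e) / ((p ^ m) ^ B.card) else 0 with hvaldef
  have hval_nonneg : ∀ B, 0 ≤ val B := by
    intro B
    rw [hvaldef]
    by_cases hB : B.Nonempty
    · simp only [hB, if_pos]; positivity
    · simp only [hB, if_neg, not_false_iff]; exact le_refl 0
  have hfib : ∑ q ∈ Inj V n ×ˢ Inj V n, bnd q ≤
      ∑ B : Finset V, (I * (v:ℝ)^B.card * (n:ℝ)^(v - B.card)) * val B := by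
    rw [← Finset.sum_fiberwise (Inj V n ×ˢ Inj V n) (fun q => Aset q.1 q.2) bnd]
    apply Finset.sum_le_sum
    intro B _
    have hvalq : ∀ q ∈ (Inj V n ×ˢ Inj V n).filter (fun q => Aset q.1 q.2 = B),
        bnd q = val B := by
      intro q hq
      rw [Finset.mem_filter] at hq
      rw [hbnddef, hvaldef]
      simp only [hq.2]
    rw [Finset.sum_congr rfl hvalq, Finset.sum_const, nsmul_eq_mul]
    apply mul_le_mul_of_nonneg_right _ (hval_nonneg B)
    have hfc := fiber_card (V := V) (n := n) B
    calc ((((Inj V n ×ˢ Inj V n).filter (fun q => Aset q.1 q.2 = B)).card : ℝ))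
        ≤ (((Inj V n).card * (Fintype.card V)^B.card * n^(Fintype.card V - B.card) : ℕ) : ℝ) := by
          exact_mod_cast hfc
      _ = I * (v:ℝ)^B.card * (n:ℝ)^(v - B.card) := by
          rw [hIdef, hvdef]; push_cast; ring
  -- per-B bound
  have hperB : ∀ B : Finset V, (I * (v:ℝ)^B.card * (n:ℝ)^(v - B.card)) * val B
      ≤ (2:ℝ)^v * (v:ℝ)^v * μ^2 / ((n:ℝ) * p ^ m) := by
    intro B
    by_cases hB : B.Nonempty
    · set k := B.card with hkdef
      have hk1 : 1 ≤ k := Finset.card_pos.mpr hB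
      have hkv : k ≤ v := by
        rw [hkdef, hvdef]; exact Finset.card_le_univ B
      rw [hvaldef]
      simp only [hB, if_pos]
      rw [← mul_div_assoc, div_le_div_iff₀ (pow_pos hpm_pos k) hnpm_pos]
      have hA : (n:ℝ)^(v-k) * ((n:ℝ) * p^m) ≤ (n:ℝ)^v * (p^m)^k := by
        have h1 : (1:ℝ) ≤ ((n:ℝ)*p^m)^(k-1) := one_le_pow₀ hnp
        calc (n:ℝ)^(v-k) * ((n:ℝ) * p^m) = (n:ℝ)^(v-k) * ((n:ℝ)*p^m) * 1 := by ring
          _ ≤ (n:ℝ)^(v-k) * ((n:ℝ)*p^m) * ((n:ℝ)*p^m)^(k-1) := by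
              apply mul_le_mul_of_nonneg_left h1 (by positivity)
          _ = (n:ℝ)^(v-k) * ((n:ℝ)*p^m)^k := by
              rw [mul_assoc, ← pow_succ']
              congr 2
              omega
          _ = (n:ℝ)^v * (p^m)^k := by
              rw [mul_pow, ← mul_assoc, ← pow_add]
              congr 2
              omega
      have hvk : ((v:ℝ))^k ≤ ((v:ℝ))^v := by
        apply pow_le_pow_right₀ (by exact_mod_cast hv1) hkv
      have hnv : (n:ℝ)^v ≤ 2^v * I := by
        calc (n:ℝ)^v = 2^v * ((n:ℝ)/2)^v := by
              rw [← mul_pow]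
              congr 1
              ring
          _ ≤ 2^v * I := by
              apply mul_le_mul_of_nonneg_left hI_low (by positivity)
      calc I * (v:ℝ)^k * (n:ℝ)^(v-k) * (p^e * p^e) * ((n:ℝ) * p^m)
          = (I * (p^e * p^e)) * ((v:ℝ)^k * ((n:ℝ)^(v-k) * ((n:ℝ) * p^m))) := by ring
        _ ≤ (I * (p^e * p^e)) * ((v:ℝ)^v * ((n:ℝ)^v * (p^m)^k)) := by
            apply mul_le_mul_of_nonneg_left _ (by positivity)
            apply mul_le_mul hvk hA (by positivity) (by positivity)
        _ ≤ (I * (p^e * p^e)) * ((v:ℝ)^v * ((2^v * I) * (p^m)^k)) := by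
            apply mul_le_mul_of_nonneg_left _ (by positivity)
            apply mul_le_mul_of_nonneg_left _ (by positivity)
            apply mul_le_mul_of_nonneg_right hnv (by positivity)
        _ = 2^v * (v:ℝ)^v * μ^2 * (p^m)^k := by
            rw [hμdef]; ring
    · rw [hvaldef]
      simp only [hB, if_neg, not_false_iff]
      rw [mul_zero]
      positivity
  -- combine
  have hcard_pow : (Finset.univ : Finset (Finset V)).card = 2^v := by
    rw [Finset.card_univ, Fintype.card_finset, hvdef]
  have hfinal : qm p (Finset.univ.filter (fun ω : Omg n => ¬ ContainsCopy H (graphOf ω))) * μ^2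
      ≤ (2:ℝ)^v * ((2:ℝ)^v * (v:ℝ)^v * μ^2 / ((n:ℝ) * p ^ m)) := by
    have h1 : qm p (Finset.univ.filter (fun ω : Omg n => ¬ ContainsCopy H (graphOf ω))) * μ^2
        ≤ qm p (Finset.univ.filter (fun ω : Omg n => Xcnt H n ω = 0)) * μ^2 :=
      mul_le_mul_of_nonneg_right hsub (by positivity)
    have h2 : qm p (Finset.univ.filter (fun ω : Omg n => Xcnt H n ω = 0)) * μ^2
        ≤ (∑ ω : Omg n, wt p ω * (Xcnt H n ω)^2) - μ^2 := by
      rw [← hIdef, ← hedef, ← hμdef] at hcheb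
      exact hcheb
    have h3 : (∑ B : Finset V, (I * (v:ℝ)^B.card * (n:ℝ)^(v - B.card)) * val B)
        ≤ ∑ _B : Finset V, (2:ℝ)^v * (v:ℝ)^v * μ^2 / ((n:ℝ) * p ^ m) :=
      Finset.sum_le_sum fun B _ => hperB B
    rw [Finset.sum_const, hcard_pow, nsmul_eq_mul] at h3
    push_cast at h3
    calc qm p (Finset.univ.filter (fun ω : Omg n => ¬ ContainsCopy H (graphOf ω))) * μ^2
        ≤ (∑ ω : Omg n, wt p ω * (Xcnt H n ω)^2) - μ^2 := le_trans h1 h2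
      _ ≤ ∑ q ∈ Inj V n ×ˢ Inj V n, bnd q := hdiff
      _ ≤ ∑ B : Finset V, (I * (v:ℝ)^B.card * (n:ℝ)^(v - B.card)) * val B := hfib
      _ ≤ (2:ℝ)^v * ((2:ℝ)^v * (v:ℝ)^v * μ^2 / ((n:ℝ) * p ^ m)) := h3
  have hμsq : 0 < μ^2 := by positivity
  refine le_of_mul_le_mul_right ?_ hμsq
  calc qm p (Finset.univ.filter (fun ω : Omg n => ¬ ContainsCopy H (graphOf ω))) * μ^2
        ≤ (2:ℝ)^v * ((2:ℝ)^v * (v:ℝ)^v * μ^2 / ((n:ℝ) * p ^ m)) := hfinal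
      _ = (2:ℝ)^v * 2^v * (v:ℝ)^v / ((n:ℝ) * p ^ m) * μ^2 := by
          field_simp


lemma qm_biUnion_le {n : ℕ} {p : ℝ} (hp0 : 0 ≤ p) (hp1 : p ≤ 1) {ι : Type*}
    (s : Finset ι) (t : ι → Finset (Omg n)) :
    qm p (s.biUnion t) ≤ ∑ i ∈ s, qm p (t i) := by
  induction s using Finset.induction with
  | empty => simp [qm]
  | insert a s' hni ih =>
    rw [Finset.biUnion_insert, Finset.sum_insert hni]
    refine le_trans ?_ (add_le_add_right ih _)
    have := Finset.sum_union_inter (s₁ := t a) (s₂ := s'.biUnion t) (f := wt p)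
    have h2 : 0 ≤ ∑ ω ∈ (t a ∩ s'.biUnion t), wt p ω :=
      Finset.sum_nonneg fun ω _ => wt_nonneg hp0 hp1 ω
    show (∑ ω ∈ (t a ∪ s'.biUnion t), wt p ω) ≤ (∑ ω ∈ t a, wt p ω) + ∑ ω ∈ s'.biUnion t, wt p ω
    linarith

lemma zero_statement_bound (hH : H.edgeSet.Nonempty) :
    ∃ v₀ e₀ : ℕ, 1 ≤ v₀ ∧ 1 ≤ e₀ ∧ m0 H = (e₀ : ℝ) / v₀ ∧
      ∀ (n : ℕ) (p : ℝ), 0 ≤ p → p ≤ 1 → 0 < n →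
        qm p (Finset.univ.filter (fun ω : Omg n => ContainsCopy H (graphOf ω)))
          ≤ (n:ℝ)^v₀ * p^e₀ := by
  obtain ⟨H₀, hne, hm⟩ := m0_mem H hH
  refine ⟨H₀.verts.ncard, H₀.edgeSet.ncard, ?_, ?_, hm, ?_⟩
  · rw [Nat.one_le_iff_ne_zero, ← Nat.pos_iff_ne_zero, Set.ncard_pos (Set.toFinite _)]
    exact hne
  · rw [Nat.one_le_iff_ne_zero]
    intro h0
    have := m0_pos H hH
    rw [hm, h0] at this
    simp at this
  · intro n p hp0 hp1 hn
    set A₀ : Finset V := H₀.verts.toFinite.toFinset with hA₀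
    set E₀ : Finset (Sym2 V) := H₀.edgeSet.toFinite.toFinset with hE₀
    have hA₀card : A₀.card = H₀.verts.ncard :=
      (Set.ncard_eq_toFinset_card H₀.verts (H₀.verts.toFinite)).symm
    have hE₀card : E₀.card = H₀.edgeSet.ncard :=
      (Set.ncard_eq_toFinset_card H₀.edgeSet (H₀.edgeSet.toFinite)).symm
    have hE₀sub : E₀ ⊆ Et H := by
      intro s hs
      rw [hE₀, Set.Finite.mem_toFinset] at hs
      rw [Et, Set.Finite.mem_toFinset]
      exact H₀.edgeSet_subset hs
    set Imgs : Finset (Finset (Sym2 (Fin n))) :=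
      (Inj V n).image (fun f => E₀.image (Sym2.map f)) with hImgs
    -- event ⊆ biUnion of cylinders
    have hsub : Finset.univ.filter (fun ω : Omg n => ContainsCopy H (graphOf ω))
        ⊆ Imgs.biUnion (fun T => cyl T) := by
      intro ω hω
      rw [Finset.mem_filter] at hω
      rw [copy_iff] at hω
      obtain ⟨_, f, hfi, hfa⟩ := hω
      apply Finset.mem_biUnion.mpr
      refine ⟨E₀.image (Sym2.map f), Finset.mem_image_of_mem _ ?_, ?_⟩
      · rw [Inj, Finset.mem_filter]; exact ⟨Finset.mem_univ f, hfi⟩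
      · rw [cyl, Finset.mem_filter]
        refine ⟨Finset.mem_univ ω, fun s hs => ?_⟩
        obtain ⟨e', he', rfl⟩ := Finset.mem_image.mp hs
        exact hfa e' (hE₀sub he')
    -- each cylinder
    have hcylval : ∀ T ∈ Imgs, qm p (cyl T) = p ^ H₀.edgeSet.ncard := by
      intro T hT
      obtain ⟨f, hf, rfl⟩ := Finset.mem_image.mp hT
      rw [Inj, Finset.mem_filter] at hf
      show qm p (Finset.univ.filter
        (fun ω : Omg n => ∀ s ∈ E₀.image (Sym2.map f), ω s = true)) = _
      rw [qm_cyl hp0 hp1, Finset.card_image_of_injective _ (Sym2.map.injective hf.2),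
        hE₀card]
    -- number of cylinders
    have hImgscard : (Imgs.card : ℝ) ≤ (n:ℝ)^(H₀.verts.ncard) := by
      classical
      set ext : (↥A₀ → Fin n) → (V → Fin n) :=
        fun h x => if hx : x ∈ A₀ then h ⟨x, hx⟩ else (⟨0, hn⟩ : Fin n) with hext
      set Fimg : (↥A₀ → Fin n) → Finset (Sym2 (Fin n)) :=
        fun h => E₀.image (Sym2.map (ext h)) with hFimg
      set r : (V → Fin n) → (↥A₀ → Fin n) := fun f x => f x with hr
      have hclaim : ∀ f : V → Fin n, E₀.image (Sym2.map f) = Fimg (r f) := by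
        intro f
        rw [hFimg]
        apply Finset.image_congr
        intro e he
        rw [Finset.mem_coe, hE₀, Set.Finite.mem_toFinset] at he
        induction e with
        | _ u v =>
          have hadj : H₀.Adj u v := (SimpleGraph.Subgraph.mem_edgeSet).mp he
          have hu : u ∈ A₀ := by
            rw [hA₀, Set.Finite.mem_toFinset]; exact H₀.edge_vert hadj
          have hv : v ∈ A₀ := by
            rw [hA₀, Set.Finite.mem_toFinset]; exact H₀.edge_vert hadj.symm
          rw [Sym2.map_pair_eq, Sym2.map_pair_eq, hext, hr]
          simp only [hu, hv, dif_pos]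
      have h1 : Imgs = ((Inj V n).image r).image Fimg := by
        rw [hImgs, Finset.image_image]
        exact Finset.image_congr fun f _ => hclaim f
      have h2 : Imgs.card ≤ n ^ A₀.card := by
        rw [h1]
        calc (((Inj V n).image r).image Fimg).card ≤ ((Inj V n).image r).card :=
              Finset.card_image_le
          _ ≤ (Finset.univ : Finset (↥A₀ → Fin n)).card := Finset.card_le_univ _
          _ = n ^ A₀.card := by
              rw [Finset.card_univ, Fintype.card_fun, Fintype.card_coe, Fintype.card_fin]
      calc (Imgs.card : ℝ) ≤ ((n ^ A₀.card : ℕ) : ℝ) := by exact_mod_cast h2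
        _ = (n:ℝ)^(H₀.verts.ncard) := by rw [hA₀card]; push_cast; ring
    calc qm p (Finset.univ.filter (fun ω : Omg n => ContainsCopy H (graphOf ω)))
        ≤ qm p (Imgs.biUnion (fun T => cyl T)) := qm_mono hp0 hp1 hsub
      _ ≤ ∑ T ∈ Imgs, qm p (cyl T) := qm_biUnion_le hp0 hp1 _ _
      _ = Imgs.card * p ^ H₀.edgeSet.ncard := by
          rw [Finset.sum_congr rfl hcylval, Finset.sum_const, nsmul_eq_mul]
      _ ≤ (n:ℝ)^(H₀.verts.ncard) * p^(H₀.edgeSet.ncard) := by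
          apply mul_le_mul_of_nonneg_right hImgscard (by positivity)

end Main

end Aux

/-- **Threshold for the appearance of a fixed graph `H`** (Bollobás).
For a fixed graph `H` with at least one edge, `n^{-1/m₀(H)}` is a threshold for containing a
copy of `H`: if `p · n^{1/m₀(H)} → 0` then a.a.s. `G(n,p)` contains no copy of `H`, and if
`p · n^{1/m₀(H)} → ∞` then a.a.s. `G(n,p)` contains a copy of `H`. -/
theorem stmt_0 {V : Type} [Fintype V] (H : SimpleGraph V) (hH : H.edgeSet.Nonempty)
    (p : ℕ → ℝ) (hp : ∀ n, 0 ≤ p n ∧ p n ≤ 1) :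
    (Tendsto (fun n : ℕ => p n * (n : ℝ) ^ (1 / m0 H)) atTop (𝓝 0) →
      Tendsto (fun n : ℕ => gnp n (p n) {ω | ContainsCopy H (graphOf ω)}) atTop (𝓝 0)) ∧
    (Tendsto (fun n : ℕ => p n * (n : ℝ) ^ (1 / m0 H)) atTop atTop →
      Tendsto (fun n : ℕ => gnp n (p n) {ω | ContainsCopy H (graphOf ω)}) atTop (𝓝 1)) := by
  classical
  have hmpos : 0 < m0 H := m0_pos H hH
  have hgnp : ∀ n : ℕ, gnp n (p n) {ω | ContainsCopy H (graphOf ω)}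
      = ENNReal.ofReal (qm (p n)
          (Finset.univ.filter (fun ω : Omg n => ContainsCopy H (graphOf ω)))) := by
    intro n
    have hset : {ω : Omg n | ContainsCopy H (graphOf ω)} =
        (↑(Finset.univ.filter (fun ω : Omg n => ContainsCopy H (graphOf ω))) : Set (Omg n)) := by
      ext ω; simp
    rw [hset, gnp_eq_qm (hp n).1 (hp n).2]
  constructor
  · -- 0-statement
    intro h0
    obtain ⟨v₀, e₀, hv₀, he₀, hm, hbound⟩ := zero_statement_bound H hH
    have he₀R : (0:ℝ) < (e₀:ℝ) := by exact_mod_cast he₀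
    have hv₀R : (0:ℝ) < (v₀:ℝ) := by exact_mod_cast hv₀
    have hrw : ∀ n : ℕ, (n:ℝ)^v₀ * (p n)^e₀ = (p n * (n:ℝ) ^ (1 / m0 H))^e₀ := by
      intro n
      have h1 : (1:ℝ) / m0 H = (v₀:ℝ) / (e₀:ℝ) := by
        rw [hm, one_div_div]
      have h2 : ((n:ℝ) ^ ((v₀:ℝ) / (e₀:ℝ)))^e₀ = (n:ℝ)^v₀ := by
        rw [← Real.rpow_natCast ((n:ℝ) ^ ((v₀:ℝ) / (e₀:ℝ))) e₀, ← Real.rpow_mul (Nat.cast_nonneg n),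
          div_mul_cancel₀ _ (ne_of_gt he₀R), Real.rpow_natCast]
      rw [mul_pow, h1, h2]
      ring
    have hb : Tendsto (fun n : ℕ => (p n * (n:ℝ) ^ (1 / m0 H))^e₀) atTop (𝓝 0) := by
      have := h0.pow e₀
      rwa [zero_pow (Nat.one_le_iff_ne_zero.mp he₀)] at this
    have hreal : Tendsto (fun n : ℕ => qm (p n)
        (Finset.univ.filter (fun ω : Omg n => ContainsCopy H (graphOf ω)))) atTop (𝓝 0) := by
      apply tendsto_of_tendsto_of_tendsto_of_le_of_le' tendsto_const_nhds hb
      · exact Eventually.of_forall fun n => qm_nonneg (hp n).1 (hp n).2 _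
      · filter_upwards [eventually_gt_atTop 0] with n hn
        rw [← hrw n]
        exact hbound n (p n) (hp n).1 (hp n).2 hn
    have := ENNReal.tendsto_ofReal hreal
    rw [ENNReal.ofReal_zero] at this
    exact (Filter.tendsto_congr hgnp).mpr this
  · -- 1-statement
    intro h1
    set m := m0 H with hmdef
    set v := Fintype.card V with hvdef
    set C : ℝ := (2:ℝ)^v * 2^v * (v:ℝ)^v with hCdef
    have hn1 : Tendsto (fun n : ℕ => (n:ℝ) * (p n) ^ m) atTop atTop := by
      have hcomp : Tendsto (fun n : ℕ => (p n * (n:ℝ) ^ (1 / m))^m) atTop atTop :=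
        (tendsto_rpow_atTop hmpos).comp h1
      apply hcomp.congr
      intro n
      rw [Real.mul_rpow (hp n).1 (Real.rpow_nonneg (Nat.cast_nonneg n) _),
        ← Real.rpow_mul (Nat.cast_nonneg n), one_div_mul_cancel (ne_of_gt hmpos),
        Real.rpow_one]
      ring
    have heb : ∀ᶠ n : ℕ in atTop, qm (p n)
        (Finset.univ.filter (fun ω : Omg n => ¬ ContainsCopy H (graphOf ω)))
        ≤ C / ((n:ℝ) * (p n) ^ m) := by
      filter_upwards [eventually_ge_atTop (2 * v), hn1.eventually_ge_atTop 1] with n hn2v hnp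
      exact nocopy_bound H (hp n).1 (hp n).2 hH hn2v hnp
    have hC0 : Tendsto (fun n : ℕ => C / ((n:ℝ) * (p n) ^ m)) atTop (𝓝 0) :=
      Tendsto.div_atTop tendsto_const_nhds hn1
    have hqc0 : Tendsto (fun n : ℕ => qm (p n)
        (Finset.univ.filter (fun ω : Omg n => ¬ ContainsCopy H (graphOf ω)))) atTop (𝓝 0) := by
      apply tendsto_of_tendsto_of_tendsto_of_le_of_le' tendsto_const_nhds hC0
      · exact Eventually.of_forall fun n => qm_nonneg (hp n).1 (hp n).2 _
      · exact heb
    have hsplit : ∀ n : ℕ, qm (p n)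
        (Finset.univ.filter (fun ω : Omg n => ContainsCopy H (graphOf ω)))
        = 1 - qm (p n)
            (Finset.univ.filter (fun ω : Omg n => ¬ ContainsCopy H (graphOf ω))) := by
      intro n
      have := Finset.sum_filter_add_sum_filter_not (Finset.univ : Finset (Omg n))
        (fun ω => ContainsCopy H (graphOf ω)) (wt (p n))
      have huniv : qm (p n) (Finset.univ : Finset (Omg n)) = 1 := qm_univ (hp n).1 (hp n).2
      show (∑ ω ∈ Finset.univ.filter (fun ω : Omg n => ContainsCopy H (graphOf ω)), wt (p n) ω) = _
      rw [qm] at huniv ⊢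
      linarith [this, huniv]
    have hreal : Tendsto (fun n : ℕ => qm (p n)
        (Finset.univ.filter (fun ω : Omg n => ContainsCopy H (graphOf ω)))) atTop (𝓝 1) := by
      rw [tendsto_congr hsplit]
      have := tendsto_const_nhds (x := (1:ℝ)) (f := atTop (α := ℕ)) |>.sub hqc0
      simpa using this
    have := ENNReal.tendsto_ofReal hreal
    rw [ENNReal.ofReal_one] at this
    exact (Filter.tendsto_congr hgnp).mpr this
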